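/- Let π be a measure on (0,∞) with ∫ (y ∧ y²) π(dy) < ∞, and for λ ≥ 0 set g(λ) := 2βλ + ∫_{(0,∞)} y(1 - e^{-λy}) π(dy), where β ≥ 0 is a constant. For 0 < β' < 1, the integral ∫_0^1 g(s) s^{-(1+β')} ds is finite if and only if ∫_{(1,∞)} y^{1+β'} π(dy) is finite. -/

import Mathlib

open MeasureTheory Set Real
open scoped ENNReal

lemma aux_rpow1 (r : ℝ) (hr : -1 < r) (c : ℝ) (hc : 0 < c) :
    ∫⁻ s in Set.Ioc (0:ℝ) c, ENNReal.ofReal (s ^ r) = ENNReal.ofReal (c ^ (r+1) / (r+1)) := by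
  have hint : IntervalIntegrable (fun x : ℝ => x ^ r) volume 0 c :=
    intervalIntegral.intervalIntegrable_rpow' hr
  have hI : IntegrableOn (fun x : ℝ => x ^ r) (Set.Ioc 0 c) volume := hint.1
  rw [← ofReal_integral_eq_lintegral_ofReal hI]
  · rw [← intervalIntegral.integral_of_le hc.le, integral_rpow (Or.inl hr),
      Real.zero_rpow (by linarith), sub_zero]
  · filter_upwards [ae_restrict_mem measurableSet_Ioc] with x hx
    exact Real.rpow_nonneg hx.1.le r

lemma aux_exp1 (t : ℝ) (ht : 0 ≤ t) : 1 - Real.exp (-t) ≤ t := by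
  nlinarith [Real.add_one_le_exp (-t)]

lemma aux_exp2 (t : ℝ) (ht : 0 ≤ t) : 0 ≤ 1 - Real.exp (-t) := by
  have : Real.exp (-t) ≤ Real.exp 0 := Real.exp_le_exp.2 (by linarith)
  simp only [Real.exp_zero] at this; linarith

lemma aux_exp3 (t : ℝ) : 1 - Real.exp (-t) ≤ 1 := by
  have := Real.exp_pos (-t); linarith

-- pointwise bound: for 0 < s, 0 ≤ y : s^(-p) * (y*(1-exp(-(s*y)))) ≤ s^(-β') * y^2  (p = 1+β')

lemma aux_pt1 (p β' : ℝ) (hp : p = 1 + β') (s y : ℝ) (hs : 0 < s) (hy : 0 ≤ y) :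
    s ^ (-p) * (y * (1 - Real.exp (-(s*y)))) ≤ s ^ (-β') * y^2 := by
  have h1 : y * (1 - Real.exp (-(s*y))) ≤ y * (s*y) :=
    mul_le_mul_of_nonneg_left (aux_exp1 _ (by positivity)) hy
  have h2 : s ^ (-p) * (y * (1 - Real.exp (-(s*y)))) ≤ s ^ (-p) * (y * (s * y)) :=
    mul_le_mul_of_nonneg_left h1 (Real.rpow_nonneg hs.le _)
  refine h2.trans_eq ?_
  have : s ^ (-p) * s = s ^ (-β') := by
    rw [← Real.rpow_add_one hs.ne' (-p)]; ring_nf; rw [hp]; ring_nf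
  calc s ^ (-p) * (y * (s * y)) = (s ^ (-p) * s) * y^2 := by ring
    _ = s ^ (-β') * y^2 := by rw [this]

lemma aux_L_small (p β' : ℝ) (hp : p = 1 + β') (hβ'0 : 0 < β') (hβ'1 : β' < 1)
    (y : ℝ) (hy : 0 ≤ y) :
    (∫⁻ s in Set.Ioc (0:ℝ) 1, ENNReal.ofReal (s ^ (-p) * (y * (1 - Real.exp (-(s*y))))))
      ≤ ENNReal.ofReal (y^2 / (1-β')) := by
  have step1 : (∫⁻ s in Set.Ioc (0:ℝ) 1, ENNReal.ofReal (s ^ (-p) * (y * (1 - Real.exp (-(s*y))))))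
      ≤ ∫⁻ s in Set.Ioc (0:ℝ) 1, ENNReal.ofReal (y^2) * ENNReal.ofReal (s ^ (-β')) := by
    refine lintegral_mono_ae ?_
    filter_upwards [ae_restrict_mem measurableSet_Ioc] with s hs
    rw [← ENNReal.ofReal_mul (by positivity)]
    exact ENNReal.ofReal_le_ofReal <| (aux_pt1 p β' hp s y hs.1 hy).trans_eq (mul_comm _ _)
  refine step1.trans ?_
  rw [lintegral_const_mul' _ _ ENNReal.ofReal_ne_top,
    aux_rpow1 (-β') (by linarith) 1 one_pos, Real.one_rpow,
    ← ENNReal.ofReal_mul (by positivity)]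
  apply ENNReal.ofReal_le_ofReal
  rw [div_eq_mul_inv, div_eq_mul_inv, one_mul]
  have : -β' + 1 = 1 - β' := by ring
  rw [this]

lemma aux_rpow2 (r : ℝ) (hr : r ≠ -1) (a : ℝ) (ha : 0 < a) (ha1 : a ≤ 1) :
    ∫⁻ s in Set.Ioc a 1, ENNReal.ofReal (s ^ r) = ENNReal.ofReal ((1 - a ^ (r+1)) / (r+1)) := by
  have h0 : (0:ℝ) ∉ uIcc a 1 := by
    rw [Set.uIcc_of_le ha1]; exact fun h => absurd h.1 (by linarith)
  have hint : IntervalIntegrable (fun x : ℝ => x ^ r) volume a 1 :=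
    intervalIntegral.intervalIntegrable_rpow (Or.inr h0)
  have hI : IntegrableOn (fun x : ℝ => x ^ r) (Set.Ioc a 1) volume := hint.1
  rw [← ofReal_integral_eq_lintegral_ofReal hI]
  · rw [← intervalIntegral.integral_of_le ha1, integral_rpow (Or.inr ⟨hr, h0⟩),
      Real.one_rpow]
  · filter_upwards [ae_restrict_mem measurableSet_Ioc] with x hx
    exact Real.rpow_nonneg (le_trans ha.le hx.1.le) r

-- value of ∫ s^(-p) over (1/y, 1] for y > 1, p = 1+β'

lemma aux_rpow3 (p β' : ℝ) (hp : p = 1 + β') (hβ'0 : 0 < β') (y : ℝ) (hy : 1 < y) :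
    ∫⁻ s in Set.Ioc (1/y) 1, ENNReal.ofReal (s ^ (-p))
      = ENNReal.ofReal ((y ^ β' - 1) / β') := by
  have hy0 : (0:ℝ) < y := by linarith
  have h := aux_rpow2 (-p) (by rw [hp]; intro h; linarith [neg_eq_iff_eq_neg.1 h]) (1/y)
    (by positivity) (by rw [div_le_one hy0]; linarith)
  rw [h]
  congr 1
  have e1 : -p + 1 = -β' := by rw [hp]; ring
  rw [e1]
  have e2 : (1/y) ^ (-β') = y ^ β' := by
    rw [one_div, ← Real.rpow_neg_one y, ← Real.rpow_mul hy0.le]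
    ring_nf
  rw [e2]
  rw [div_eq_div_iff (by intro; nlinarith) (by positivity)]
  ring

lemma aux_L_big (p β' : ℝ) (hp : p = 1 + β') (hβ'0 : 0 < β') (hβ'1 : β' < 1)
    (y : ℝ) (hy : 1 < y) :
    (∫⁻ s in Set.Ioc (0:ℝ) 1, ENNReal.ofReal (s ^ (-p) * (y * (1 - Real.exp (-(s*y))))))
      ≤ ENNReal.ofReal ((1/(1-β') + 1/β') * y ^ p) := by
  have hy0 : (0:ℝ) < y := by linarith
  have h1y : (0:ℝ) < 1/y := by positivity
  have h1y1 : (1:ℝ)/y ≤ 1 := by rw [div_le_one hy0]; linarith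
  -- split domain
  have hsplit : Set.Ioc (0:ℝ) 1 = Set.Ioc 0 (1/y) ∪ Set.Ioc (1/y) 1 :=
    (Set.Ioc_union_Ioc_eq_Ioc h1y.le h1y1).symm
  rw [hsplit, lintegral_union measurableSet_Ioc (Set.Ioc_disjoint_Ioc_of_le le_rfl)]
  -- piece 1
  have hpiece1 : (∫⁻ s in Set.Ioc (0:ℝ) (1/y),
        ENNReal.ofReal (s ^ (-p) * (y * (1 - Real.exp (-(s*y))))))
      ≤ ENNReal.ofReal (y ^ p / (1-β')) := by
    have step1 : (∫⁻ s in Set.Ioc (0:ℝ) (1/y),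
          ENNReal.ofReal (s ^ (-p) * (y * (1 - Real.exp (-(s*y))))))
        ≤ ∫⁻ s in Set.Ioc (0:ℝ) (1/y), ENNReal.ofReal (y^2) * ENNReal.ofReal (s ^ (-β')) := by
      refine lintegral_mono_ae ?_
      filter_upwards [ae_restrict_mem measurableSet_Ioc] with s hs
      rw [← ENNReal.ofReal_mul (by positivity)]
      exact ENNReal.ofReal_le_ofReal <| (aux_pt1 p β' hp s y hs.1 hy0.le).trans_eq (mul_comm _ _)
    refine step1.trans ?_
    rw [lintegral_const_mul' _ _ ENNReal.ofReal_ne_top,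
      aux_rpow1 (-β') (by linarith) (1/y) h1y,
      ← ENNReal.ofReal_mul (by positivity)]
    apply ENNReal.ofReal_le_ofReal
    have e1 : -β' + 1 = 1 - β' := by ring
    rw [e1]
    have e2 : (1/y) ^ (1-β') = y ^ (β'-1) := by
      rw [one_div, ← Real.rpow_neg_one y, ← Real.rpow_mul hy0.le]
      ring_nf
    rw [e2]
    have e3 : y^2 * y^(β'-1) = y ^ p := by
      have h2r : (y:ℝ)^2 = y ^ (2:ℝ) := by
        rw [← Real.rpow_natCast y 2]; norm_num
      rw [h2r, ← Real.rpow_add hy0, hp]; ring_nf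
    calc y^2 * (y^(β'-1)/(1-β')) = (y^2*y^(β'-1))/(1-β') := by ring
      _ = y ^ p / (1-β') := by rw [e3]
      _ ≤ y ^ p / (1-β') := le_refl _
  -- piece 2
  have hpiece2 : (∫⁻ s in Set.Ioc ((1:ℝ)/y) 1,
        ENNReal.ofReal (s ^ (-p) * (y * (1 - Real.exp (-(s*y))))))
      ≤ ENNReal.ofReal (y ^ p / β') := by
    have step1 : (∫⁻ s in Set.Ioc ((1:ℝ)/y) 1,
          ENNReal.ofReal (s ^ (-p) * (y * (1 - Real.exp (-(s*y))))))
        ≤ ∫⁻ s in Set.Ioc ((1:ℝ)/y) 1, ENNReal.ofReal y * ENNReal.ofReal (s ^ (-p)) := by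
      refine lintegral_mono_ae ?_
      filter_upwards [ae_restrict_mem measurableSet_Ioc] with s hs
      rw [← ENNReal.ofReal_mul hy0.le]
      apply ENNReal.ofReal_le_ofReal
      have h1 : y * (1 - Real.exp (-(s*y))) ≤ y * 1 :=
        mul_le_mul_of_nonneg_left (aux_exp3 _) hy0.le
      calc s ^ (-p) * (y * (1 - Real.exp (-(s*y)))) ≤ s ^ (-p) * (y * 1) :=
            mul_le_mul_of_nonneg_left h1 (Real.rpow_nonneg (by linarith [hs.1, h1y] : (0:ℝ) ≤ s) _)
        _ = y * s ^ (-p) := by ring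
    refine step1.trans ?_
    rw [lintegral_const_mul' _ _ ENNReal.ofReal_ne_top, aux_rpow3 p β' hp hβ'0 y hy,
      ← ENNReal.ofReal_mul hy0.le]
    apply ENNReal.ofReal_le_ofReal
    have e3 : y * y^β' = y ^ p := by
      nth_rewrite 1 [← Real.rpow_one y]
      rw [← Real.rpow_add hy0, hp]
    calc y * ((y ^ β' - 1) / β') = (y * y^β' - y)/β' := by ring
      _ ≤ y ^ p / β' := by
          have hnum : y * y ^ β' - y ≤ y ^ p := by nlinarith [e3]
          gcongr
  calc _ ≤ ENNReal.ofReal (y ^ p / (1-β')) + ENNReal.ofReal (y ^ p / β') :=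
        add_le_add hpiece1 hpiece2
    _ = ENNReal.ofReal ((1/(1-β') + 1/β') * y ^ p) := by
        rw [← ENNReal.ofReal_add (div_nonneg (Real.rpow_nonneg hy0.le _) (by linarith))
          (div_nonneg (Real.rpow_nonneg hy0.le _) hβ'0.le)]
        congr 1; field_simp

lemma aux_L_lower (p β' : ℝ) (hp : p = 1 + β') (hβ'0 : 0 < β') (hβ'1 : β' < 1)
    (y : ℝ) (hy : (2:ℝ) ^ (1/β') ≤ y) :
    ENNReal.ofReal ((1 - Real.exp (-1)) / (2*β') * y ^ p)
      ≤ ∫⁻ s in Set.Ioc (0:ℝ) 1, ENNReal.ofReal (s ^ (-p) * (y * (1 - Real.exp (-(s*y))))) := by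
  have hM1 : (1:ℝ) < (2:ℝ) ^ (1/β') := by
    apply Real.one_lt_rpow_iff_of_pos (by norm_num) |>.2
    exact Or.inl ⟨by norm_num, by positivity⟩
  have hy1 : (1:ℝ) < y := lt_of_lt_of_le hM1 hy
  have hy0 : (0:ℝ) < y := by linarith
  have h1y : (0:ℝ) < 1/y := by positivity
  have h1y1 : (1:ℝ)/y ≤ 1 := by rw [div_le_one hy0]; linarith
  -- y ^ β' ≥ 2
  have hyb : (2:ℝ) ≤ y ^ β' := by
    have h1 : ((2:ℝ) ^ (1/β')) ^ β' ≤ y ^ β' :=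
      Real.rpow_le_rpow (by positivity) hy hβ'0.le
    have h2 : ((2:ℝ) ^ (1/β')) ^ β' = 2 := by
      rw [← Real.rpow_mul (by norm_num)]
      rw [one_div_mul_cancel hβ'0.ne', Real.rpow_one]
    linarith [h1, h2.symm.le]
  have hsub : Set.Ioc ((1:ℝ)/y) 1 ⊆ Set.Ioc (0:ℝ) 1 := fun s hs => ⟨lt_trans h1y hs.1, hs.2⟩
  refine le_trans ?_ (lintegral_mono_set hsub)
  -- lower bound on the subinterval
  have hexp01 : 0 ≤ 1 - Real.exp (-1) := aux_exp2 1 zero_le_one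
  have step1 : ∫⁻ s in Set.Ioc ((1:ℝ)/y) 1, ENNReal.ofReal (y * (1 - Real.exp (-1))) *
        ENNReal.ofReal (s ^ (-p))
      ≤ ∫⁻ s in Set.Ioc ((1:ℝ)/y) 1,
        ENNReal.ofReal (s ^ (-p) * (y * (1 - Real.exp (-(s*y))))) := by
    refine lintegral_mono_ae ?_
    filter_upwards [ae_restrict_mem measurableSet_Ioc] with s hs
    have hs0 : (0:ℝ) < s := lt_trans h1y hs.1
    have hsy : (1:ℝ) ≤ s * y := ((div_lt_iff₀ hy0).mp hs.1).le
    have hexp : 1 - Real.exp (-1) ≤ 1 - Real.exp (-(s*y)) := by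
      have h := Real.exp_le_exp.2 (neg_le_neg hsy)
      linarith
    rw [← ENNReal.ofReal_mul (mul_nonneg hy0.le hexp01)]
    apply ENNReal.ofReal_le_ofReal
    calc y * (1 - Real.exp (-1)) * s ^ (-p)
        = s ^ (-p) * (y * (1 - Real.exp (-1))) := by ring
      _ ≤ s ^ (-p) * (y * (1 - Real.exp (-(s*y)))) :=
          mul_le_mul_of_nonneg_left (mul_le_mul_of_nonneg_left hexp hy0.le)
            (Real.rpow_nonneg hs0.le _)
  refine le_trans ?_ step1
  rw [lintegral_const_mul' _ _ ENNReal.ofReal_ne_top, aux_rpow3 p β' hp hβ'0 y hy1,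
    ← ENNReal.ofReal_mul (mul_nonneg hy0.le hexp01)]
  apply ENNReal.ofReal_le_ofReal
  have hyp : y * y ^ β' = y ^ p := by
    nth_rewrite 1 [← Real.rpow_one y]
    rw [← Real.rpow_add hy0, hp]
  -- (1-e⁻¹)/(2β') * y^p ≤ y(1-e⁻¹) * (y^β'-1)/β'
  have hhalf : y ^ β' / 2 ≤ y ^ β' - 1 := by linarith
  calc (1 - Real.exp (-1)) / (2*β') * y ^ p
      = (y * (1 - Real.exp (-1))) * ((y ^ β' / 2) / β') := by
        rw [← hyp]; field_simp
    _ ≤ (y * (1 - Real.exp (-1))) * ((y ^ β' - 1) / β') := by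
        apply mul_le_mul_of_nonneg_left _ (mul_nonneg hy0.le hexp01)
        gcongr

lemma aux_tail (pi : Measure ℝ)
    (hpi : ∫⁻ y in Set.Ioi (0:ℝ), ENNReal.ofReal (min y (y ^ 2)) ∂pi < ⊤)
    {c : ℝ} (hc : 0 < c) : pi (Set.Ioi c) < ⊤ := by
  have hmono : ∀ y ∈ Set.Ioi c, ENNReal.ofReal (min c (c^2)) ≤ ENNReal.ofReal (min y (y^2)) := by
    intro y hy
    apply ENNReal.ofReal_le_ofReal
    exact min_le_min (le_of_lt hy) (by nlinarith [hy.out])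
  have h1 : ENNReal.ofReal (min c (c^2)) * pi (Set.Ioi c)
      ≤ ∫⁻ y in Set.Ioi c, ENNReal.ofReal (min y (y^2)) ∂pi := by
    rw [← setLIntegral_const]
    exact setLIntegral_mono (by measurability) hmono
  have h2 : ∫⁻ y in Set.Ioi c, ENNReal.ofReal (min y (y^2)) ∂pi
      ≤ ∫⁻ y in Set.Ioi 0, ENNReal.ofReal (min y (y^2)) ∂pi :=
    lintegral_mono_set (Set.Ioi_subset_Ioi hc.le)
  have hpos : 0 < min c (c^2) := lt_min hc (by positivity)
  have := lt_of_le_of_lt (h1.trans h2) hpi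
  rw [ENNReal.mul_lt_top_iff] at this
  rcases this with ⟨_, h⟩ | h | h
  · exact h
  · · rw [ENNReal.ofReal_eq_zero] at h; linarith
  · simp [h]

lemma aux_sf (pi : Measure ℝ)
    (hpi : ∫⁻ y in Set.Ioi (0:ℝ), ENNReal.ofReal (min y (y ^ 2)) ∂pi < ⊤) :
    SigmaFinite (pi.restrict (Set.Ioi 0)) := by
  refine ⟨⟨⟨fun n => Set.Ioi ((1:ℝ) / (n + 1)) ∪ Set.Iic 0, fun _ => trivial, ?_, ?_⟩⟩⟩
  · intro n
    have hpos : (0:ℝ) < 1 / (n + 1) := by positivity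
    rw [Measure.restrict_apply' measurableSet_Ioi]
    have : (Set.Ioi ((1:ℝ) / (n + 1)) ∪ Set.Iic 0) ∩ Set.Ioi 0 = Set.Ioi ((1:ℝ)/(n+1)) := by
      ext x
      simp only [Set.mem_inter_iff, Set.mem_union, Set.mem_Ioi, Set.mem_Iic]
      constructor
      · rintro ⟨h1 | h1, h2⟩
        · exact h1
        · linarith
      · intro h; exact ⟨Or.inl h, by linarith⟩
    rw [this]
    exact aux_tail pi hpi hpos
  · rw [Set.eq_univ_iff_forall]
    intro x
    rcases le_or_gt x 0 with hx | hx
    · exact Set.mem_iUnion.2 ⟨0, Or.inr hx⟩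
    · obtain ⟨n, hn⟩ := exists_nat_one_div_lt hx
      exact Set.mem_iUnion.2 ⟨n, Or.inl hn⟩

lemma aux_meas (p : ℝ) : Measurable (fun q : ℝ × ℝ =>
    ENNReal.ofReal (q.1 ^ (-p) * (q.2 * (1 - Real.exp (-(q.1 * q.2)))))) := by
  apply Measurable.ennreal_ofReal
  apply Measurable.mul
  · fun_prop
  · exact measurable_snd.mul ((measurable_const.sub
      (((measurable_fst.mul measurable_snd).neg).exp)))

lemma aux_decomp (pi : Measure ℝ) (β : ℝ) (hβ : 0 ≤ β)
    (hpi : ∫⁻ y in Set.Ioi (0:ℝ), ENNReal.ofReal (min y (y ^ 2)) ∂pi < ⊤)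
    (g : ℝ → ℝ)
    (hg : ∀ lam : ℝ, g lam =
      2 * β * lam + ∫ y in Set.Ioi (0:ℝ), y * (1 - Real.exp (-(lam * y))) ∂pi)
    (p : ℝ) (hp0 : 0 < p) :
    (∫⁻ s in Set.Ioc (0:ℝ) 1, ENNReal.ofReal (g s * s ^ (-p)))
      = (∫⁻ s in Set.Ioc (0:ℝ) 1, ENNReal.ofReal (2 * β * s * s ^ (-p)))
        + ∫⁻ y in Set.Ioi (0:ℝ),
            (∫⁻ s in Set.Ioc (0:ℝ) 1,
              ENNReal.ofReal (s ^ (-p) * (y * (1 - Real.exp (-(s * y)))))) ∂pi := by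
  haveI := aux_sf pi hpi
  -- integrability of min y y^2
  have hminnn : 0 ≤ᵐ[pi.restrict (Set.Ioi 0)] fun y => min y (y^2) := by
    filter_upwards [ae_restrict_mem measurableSet_Ioi] with y hy
    exact le_min hy.out.le (by positivity)
  have hminint : Integrable (fun y => min y (y^2)) (pi.restrict (Set.Ioi 0)) := by
    refine ⟨(measurable_id.min (measurable_id.pow_const 2)).aestronglyMeasurable, ?_⟩
    rw [hasFiniteIntegral_iff_ofReal hminnn]
    exact hpi
  -- integrability of the integrand for each s ∈ (0,1]
  have hint : ∀ s : ℝ, s ∈ Set.Ioc (0:ℝ) 1 →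
      Integrable (fun y => y * (1 - Real.exp (-(s * y)))) (pi.restrict (Set.Ioi 0)) := by
    intro s hs
    refine hminint.mono' ?_ ?_
    · exact (measurable_id.mul ((measurable_const.sub
        ((measurable_const_mul s).neg.exp)))).aestronglyMeasurable
    · filter_upwards [ae_restrict_mem measurableSet_Ioi] with y hy
      have hy0 : (0:ℝ) < y := hy
      have h1 : 0 ≤ 1 - Real.exp (-(s*y)) := aux_exp2 _ (mul_nonneg hs.1.le hy0.le)
      rw [Real.norm_eq_abs, abs_of_nonneg (mul_nonneg hy0.le h1)]
      refine le_min ?_ ?_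
      · calc y * (1 - Real.exp (-(s*y))) ≤ y * 1 :=
            mul_le_mul_of_nonneg_left (aux_exp3 _) hy0.le
          _ = y := mul_one y
      · calc y * (1 - Real.exp (-(s*y))) ≤ y * (s*y) :=
            mul_le_mul_of_nonneg_left (aux_exp1 _ (mul_nonneg hs.1.le hy0.le)) hy0.le
          _ ≤ y^2 := by nlinarith [hs.1, hs.2, hy0]
  -- nonnegativity of the inner integral
  have hnn : ∀ s : ℝ, s ∈ Set.Ioc (0:ℝ) 1 →
      0 ≤ ∫ y in Set.Ioi (0:ℝ), y * (1 - Real.exp (-(s * y))) ∂pi := by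
    intro s hs
    apply integral_nonneg_of_ae
    filter_upwards [ae_restrict_mem measurableSet_Ioi] with y hy
    exact mul_nonneg hy.out.le (aux_exp2 _ (mul_nonneg hs.1.le hy.out.le))
  -- rewrite the integrand on the set
  have hcong : ∫⁻ s in Set.Ioc (0:ℝ) 1, ENNReal.ofReal (g s * s ^ (-p))
      = ∫⁻ s in Set.Ioc (0:ℝ) 1,
          (ENNReal.ofReal (2 * β * s * s ^ (-p))
            + ENNReal.ofReal (s ^ (-p)) *
              ∫⁻ y in Set.Ioi (0:ℝ), ENNReal.ofReal (y * (1 - Real.exp (-(s*y)))) ∂pi) := by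
    refine setLIntegral_congr_fun measurableSet_Ioc ?_
    intro s hs
    beta_reduce
    have hs0 : (0:ℝ) < s := hs.1
    have hrp : (0:ℝ) ≤ s ^ (-p) := Real.rpow_nonneg hs0.le _
    rw [hg s, add_mul, ENNReal.ofReal_add
      (mul_nonneg (mul_nonneg (by linarith) hs0.le) hrp) (mul_nonneg (hnn s hs) hrp)]
    congr 1
    rw [mul_comm _ (s ^ (-p)), ENNReal.ofReal_mul hrp,
      ofReal_integral_eq_lintegral_ofReal (hint s hs) ?_]
    filter_upwards [ae_restrict_mem measurableSet_Ioi] with y hy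
    exact mul_nonneg hy.out.le (aux_exp2 _ (mul_nonneg hs0.le hy.out.le))
  rw [hcong, lintegral_add_left (by fun_prop)]
  congr 1
  -- pull constant into lintegral and swap
  have hpull : ∀ s : ℝ, s ∈ Set.Ioc (0:ℝ) 1 →
      ENNReal.ofReal (s ^ (-p)) *
        (∫⁻ y in Set.Ioi (0:ℝ), ENNReal.ofReal (y * (1 - Real.exp (-(s*y)))) ∂pi)
      = ∫⁻ y in Set.Ioi (0:ℝ),
          ENNReal.ofReal (s ^ (-p) * (y * (1 - Real.exp (-(s*y))))) ∂pi := by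
    intro s hs
    rw [← lintegral_const_mul' _ _ ENNReal.ofReal_ne_top]
    congr 1
    ext y
    rw [← ENNReal.ofReal_mul (Real.rpow_nonneg hs.1.le _)]
  rw [setLIntegral_congr_fun measurableSet_Ioc hpull]
  exact lintegral_lintegral_swap (aux_meas p).aemeasurable

/-- For a measure `π` on `(0,∞)` with `∫ (y ∧ y²) π(dy) < ∞`, `β ≥ 0`, and
`g(λ) := 2βλ + ∫_{(0,∞)} y(1 - e^{-λy}) π(dy)`, and `0 < β' < 1`:
`∫_0^1 g(s) s^{-(1+β')} ds < ∞` if and only if `∫_{(1,∞)} y^{1+β'} π(dy) < ∞`. -/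
theorem stmt_17 (pi : Measure ℝ) (β : ℝ) (hβ : 0 ≤ β)
    (hpi : ∫⁻ y in Set.Ioi (0:ℝ), ENNReal.ofReal (min y (y ^ 2)) ∂pi < ⊤)
    (g : ℝ → ℝ)
    (hg : ∀ lam : ℝ, g lam =
      2 * β * lam + ∫ y in Set.Ioi (0:ℝ), y * (1 - Real.exp (-(lam * y))) ∂pi)
    (β' : ℝ) (hβ'0 : 0 < β') (hβ'1 : β' < 1) :
    (∫⁻ s in Set.Ioc (0:ℝ) 1, ENNReal.ofReal (g s * s ^ (-(1 + β'))) < ⊤)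
      ↔ (∫⁻ y in Set.Ioi (1:ℝ), ENNReal.ofReal (y ^ (1 + β')) ∂pi < ⊤) := by
  set p : ℝ := 1 + β' with hp
  have hp0 : (0:ℝ) < p := by rw [hp]; linarith
  set L : ℝ → ℝ≥0∞ := fun y =>
    ∫⁻ s in Set.Ioc (0:ℝ) 1, ENNReal.ofReal (s ^ (-p) * (y * (1 - Real.exp (-(s * y)))))
    with hL
  -- first term of the decomposition is finite
  have hfirst : (∫⁻ s in Set.Ioc (0:ℝ) 1, ENNReal.ofReal (2 * β * s * s ^ (-p))) < ⊤ := by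
    have hb : (∫⁻ s in Set.Ioc (0:ℝ) 1, ENNReal.ofReal (2 * β * s * s ^ (-p)))
        ≤ ∫⁻ s in Set.Ioc (0:ℝ) 1, ENNReal.ofReal (2 * β) * ENNReal.ofReal (s ^ (-β')) := by
      refine lintegral_mono_ae ?_
      filter_upwards [ae_restrict_mem measurableSet_Ioc] with s hs
      rw [← ENNReal.ofReal_mul (by linarith)]
      apply ENNReal.ofReal_le_ofReal
      have : s * s ^ (-p) = s ^ (-β') := by
        rw [mul_comm, ← Real.rpow_add_one hs.1.ne' (-p)]
        congr 1; rw [hp]; ring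
      calc 2 * β * s * s ^ (-p) = 2 * β * (s * s ^ (-p)) := by ring
        _ = 2 * β * s ^ (-β') := by rw [this]
        _ ≤ 2 * β * s ^ (-β') := le_refl _
    refine lt_of_le_of_lt hb ?_
    rw [lintegral_const_mul' _ _ ENNReal.ofReal_ne_top,
      aux_rpow1 (-β') (by linarith) 1 one_pos]
    exact ENNReal.mul_lt_top ENNReal.ofReal_lt_top ENNReal.ofReal_lt_top
  -- finiteness of the small-y part
  have hfin1 : (∫⁻ y in Set.Ioc (0:ℝ) 1, L y ∂pi) < ⊤ := by
    have hb : (∫⁻ y in Set.Ioc (0:ℝ) 1, L y ∂pi)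
        ≤ ∫⁻ y in Set.Ioc (0:ℝ) 1,
            ENNReal.ofReal (1/(1-β')) * ENNReal.ofReal (min y (y^2)) ∂pi := by
      refine lintegral_mono_ae ?_
      filter_upwards [ae_restrict_mem measurableSet_Ioc] with y hy
      refine (aux_L_small p β' hp hβ'0 hβ'1 y hy.1.le).trans ?_
      rw [← ENNReal.ofReal_mul (by
        have : (0:ℝ) < 1 - β' := by linarith
        positivity)]
      apply ENNReal.ofReal_le_ofReal
      have hmin : min y (y^2) = y^2 := min_eq_right (by nlinarith [hy.1, hy.2])
      rw [hmin]
      rw [div_eq_mul_inv, one_div]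
      exact le_of_eq (by ring)
    refine lt_of_le_of_lt hb ?_
    rw [lintegral_const_mul' _ _ ENNReal.ofReal_ne_top]
    refine ENNReal.mul_lt_top ENNReal.ofReal_lt_top ?_
    exact lt_of_le_of_lt (lintegral_mono_set Set.Ioc_subset_Ioi_self) hpi
  -- decomposition of the Ioi 0 integral
  have hsplit0 : (∫⁻ y in Set.Ioi (0:ℝ), L y ∂pi)
      = (∫⁻ y in Set.Ioc (0:ℝ) 1, L y ∂pi) + ∫⁻ y in Set.Ioi (1:ℝ), L y ∂pi := by
    rw [← lintegral_union measurableSet_Ioi (Set.Ioc_disjoint_Ioi le_rfl),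
      Set.Ioc_union_Ioi_eq_Ioi zero_le_one]
  have hdec := aux_decomp pi β hβ hpi g hg p hp0
  -- main equivalence with ∫ Ioi 1 L
  have hmain : (∫⁻ s in Set.Ioc (0:ℝ) 1, ENNReal.ofReal (g s * s ^ (-p)) < ⊤)
      ↔ (∫⁻ y in Set.Ioi (1:ℝ), L y ∂pi) < ⊤ := by
    rw [hdec, hsplit0]
    constructor
    · intro h
      exact lt_of_le_of_lt (le_add_self.trans le_add_self) h
    · intro h
      exact ENNReal.add_lt_top.2 ⟨hfirst, ENNReal.add_lt_top.2 ⟨hfin1, h⟩⟩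
  rw [hmain]
  have h1mb : (0:ℝ) < 1 - β' := by linarith
  constructor
  · intro h
    set M : ℝ := (2:ℝ) ^ (1/β') with hM
    have hM1 : (1:ℝ) < M := by
      rw [hM]
      exact Real.one_lt_rpow_iff_of_pos (by norm_num) |>.2 (Or.inl ⟨by norm_num, by positivity⟩)
    have hexp1 : Real.exp (-1) < 1 := by
      have h' := Real.exp_lt_exp.2 (show (-1:ℝ) < 0 by norm_num)
      simpa [Real.exp_zero] using h'
    set c₀ : ℝ := (1 - Real.exp (-1)) / (2*β') with hc₀
    have hc0 : (0:ℝ) < c₀ := div_pos (by linarith) (by linarith)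
    have hsplitIoi : (∫⁻ y in Set.Ioi (1:ℝ), ENNReal.ofReal (y ^ p) ∂pi)
        = (∫⁻ y in Set.Ioc (1:ℝ) M, ENNReal.ofReal (y ^ p) ∂pi)
          + ∫⁻ y in Set.Ioi M, ENNReal.ofReal (y ^ p) ∂pi := by
      rw [← lintegral_union measurableSet_Ioi (Set.Ioc_disjoint_Ioi le_rfl),
        Set.Ioc_union_Ioi_eq_Ioi hM1.le]
    rw [hsplitIoi]
    refine ENNReal.add_lt_top.2 ⟨?_, ?_⟩
    · have hb : (∫⁻ y in Set.Ioc (1:ℝ) M, ENNReal.ofReal (y ^ p) ∂pi)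
          ≤ ∫⁻ y in Set.Ioc (1:ℝ) M,
              ENNReal.ofReal (M ^ β') * ENNReal.ofReal (min y (y^2)) ∂pi := by
        refine lintegral_mono_ae ?_
        filter_upwards [ae_restrict_mem measurableSet_Ioc] with y hy
        rw [← ENNReal.ofReal_mul (Real.rpow_nonneg (by positivity) _)]
        apply ENNReal.ofReal_le_ofReal
        have hy1 : (1:ℝ) < y := hy.1
        have hy0 : (0:ℝ) < y := by linarith
        have hmin : min y (y^2) = y := min_eq_left (by nlinarith)
        rw [hmin]
        have hyp : y ^ p = y ^ β' * y := by
          rw [hp, Real.rpow_add hy0, Real.rpow_one]; ring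
        rw [hyp]
        exact mul_le_mul_of_nonneg_right (Real.rpow_le_rpow hy0.le hy.2 hβ'0.le) hy0.le
      refine lt_of_le_of_lt hb ?_
      rw [lintegral_const_mul' _ _ ENNReal.ofReal_ne_top]
      refine ENNReal.mul_lt_top ENNReal.ofReal_lt_top ?_
      refine lt_of_le_of_lt (lintegral_mono_set ?_) hpi
      exact fun y hy => lt_trans zero_lt_one hy.1
    · have hb : (∫⁻ y in Set.Ioi M, ENNReal.ofReal (y ^ p) ∂pi)
          ≤ ∫⁻ y in Set.Ioi M, ENNReal.ofReal (c₀⁻¹) * L y ∂pi := by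
        refine lintegral_mono_ae ?_
        filter_upwards [ae_restrict_mem measurableSet_Ioi] with y hy
        have h1 : ENNReal.ofReal (c₀ * y ^ p) ≤ L y := by
          rw [hL]
          exact aux_L_lower p β' hp hβ'0 hβ'1 y hy.out.le
        calc ENNReal.ofReal (y ^ p)
            = ENNReal.ofReal (c₀⁻¹) * ENNReal.ofReal (c₀ * y ^ p) := by
              rw [← ENNReal.ofReal_mul (inv_nonneg.2 hc0.le)]
              congr 1
              field_simp
          _ ≤ ENNReal.ofReal (c₀⁻¹) * L y := mul_le_mul_right h1 _
      refine lt_of_le_of_lt hb ?_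
      rw [lintegral_const_mul' _ _ ENNReal.ofReal_ne_top]
      refine ENNReal.mul_lt_top ENNReal.ofReal_lt_top ?_
      exact lt_of_le_of_lt (lintegral_mono_set (Set.Ioi_subset_Ioi hM1.le)) h
  · intro h
    have hb : (∫⁻ y in Set.Ioi (1:ℝ), L y ∂pi)
        ≤ ∫⁻ y in Set.Ioi (1:ℝ),
            ENNReal.ofReal (1/(1-β') + 1/β') * ENNReal.ofReal (y ^ p) ∂pi := by
      refine lintegral_mono_ae ?_
      filter_upwards [ae_restrict_mem measurableSet_Ioi] with y hy
      have h1 : L y ≤ ENNReal.ofReal ((1/(1-β') + 1/β') * y ^ p) := by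
        rw [hL]
        exact aux_L_big p β' hp hβ'0 hβ'1 y hy
      refine h1.trans ?_
      rw [ENNReal.ofReal_mul (by positivity)]
    refine lt_of_le_of_lt hb ?_
    rw [lintegral_const_mul' _ _ ENNReal.ofReal_ne_top]
    exact ENNReal.mul_lt_top ENNReal.ofReal_lt_top h
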